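/- arXiv:1602.06475 — 2 statements merged into one kernel-verified Lean document; each statement's English description precedes it below -/
import Mathlib

section
/- Let H = (U ∪ {s}, F) be a finite connected multigraph without loop-edges with sink vertex s, let η be a stable sandpile on H and let x ∈ U satisfy η(x) = deg_H(x) − 1, so that η + 1_x is unstable at x. Let W_1, …, W_N be the waves of the stabilization of η + 1_x. Then for every y ∈ U the number of indices i ∈ {1,…,N} with y ∈ W_i equals n(x,y;η), the number of times y topples during the stabilization of η + 1_x; in particular the total number of waves satisfies N = n(x,x;η). -/
/-!
Waves of an avalanche and toppling numbers.

Let `H = (U ∪ {s}, F)` be a finite connected multigraph without loop-edges with sink `s`,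
let `η` be a stable sandpile on `H` and let `x ∈ U` satisfy `η x = deg_H x - 1`, so that
`η + 1_x` is unstable at `x`.  Let `W_1, …, W_N` be the waves of the stabilization of
`η + 1_x`.  Then for every `y ∈ U` the number of indices `i` with `y ∈ W_i` equals
`n(x,y;η)`, the number of times `y` topples during the stabilization of `η + 1_x`;
in particular `N = n(x,x;η)`.
-/

/-- A finite connected multigraph without loop-edges, with a distinguished sink vertex.
`mult x y` is the number of edges joining `x` and `y`. -/
structure SandpileGraph (V : Type*) [Fintype V] [DecidableEq V] where
  sink : V
  mult : V → V → ℕ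
  symm : ∀ x y, mult x y = mult y x
  loopless : ∀ x, mult x x = 0
  conn : ∀ x : V, Relation.ReflTransGen (fun a b => 0 < mult a b) x sink

namespace SandpileGraph

variable {V : Type*} [Fintype V] [DecidableEq V]

/-- The degree of a vertex. -/
def deg (H : SandpileGraph V) (x : V) : ℕ := ∑ y, H.mult x y

/-- Toppling of the vertex `x`: `x` sends one grain along each incident edge;
grains reaching the sink are lost. -/
def topple (H : SandpileGraph V) (x : V) (η : V → ℕ) : V → ℕ :=
  fun y => if y = x then η y - H.deg x else if y = H.sink then η y else η y + H.mult x y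

/-- Legality of a finite sequence of topplings: each toppled vertex is a non-sink vertex
that is unstable at the moment it is toppled. -/
def LegalSeq (H : SandpileGraph V) : (V → ℕ) → List V → Prop
  | _, [] => True
  | η, x :: l => x ≠ H.sink ∧ H.deg x ≤ η x ∧ H.LegalSeq (H.topple x η) l

/-- The result of performing a sequence of topplings. -/
def toppleList (H : SandpileGraph V) : (V → ℕ) → List V → (V → ℕ)
  | η, [] => η
  | η, x :: l => H.toppleList (H.topple x η) l

/-- A configuration is stable if every non-sink vertex has fewer grains than its degree. -/
def Stable (H : SandpileGraph V) (η : V → ℕ) : Prop :=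
  ∀ x, x ≠ H.sink → η x < H.deg x

/-- Addition of one grain at `x`. -/
def addGrain (x : V) (η : V → ℕ) : V → ℕ := Function.update η x (η x + 1)

/-- A wave started at `x` from the configuration `η` (with `η` unstable at `x`):
`x` is toppled once, and then all topplings are carried out that are possible without
toppling `x` a second time, so that at the end every non-sink vertex other than `x` is
stable; each vertex topples at most once.  The list `l` records the toppled vertices in a
legal order; the wave is the set of entries of `l`. -/
def IsWaveList (H : SandpileGraph V) (x : V) (η : V → ℕ) (l : List V) : Prop :=
  l.Nodup ∧ x ∈ l ∧ H.LegalSeq η l ∧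
    ∀ v, v ≠ H.sink → v ≠ x → H.toppleList η l v < H.deg v

variable (H : SandpileGraph V)

lemma le_topple (x : V) (η : V → ℕ) {y : V} (h : y ≠ x) :
    η y ≤ H.topple x η y := by
  unfold topple
  rw [if_neg h]
  split <;> omega

lemma le_toppleList {y : V} : ∀ (l : List V) (η : V → ℕ), y ∉ l →
    η y ≤ H.toppleList η l y := by
  intro l
  induction l with
  | nil => intro η _; exact le_refl _
  | cons v l ih =>
      intro η h
      have h1 : y ≠ v := fun hyv => h (hyv ▸ (List.mem_cons_self : v ∈ v :: l))
      have h2 : y ∉ l := fun hy => h (List.mem_cons_of_mem _ hy)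
      exact le_trans (H.le_topple v η h1) (ih _ h2)

lemma topple_comm {x y : V} (hxy : x ≠ y) (hx : x ≠ H.sink) (hy : y ≠ H.sink)
    (η : V → ℕ) (hex : H.deg x ≤ η x) (hey : H.deg y ≤ η y) :
    H.topple x (H.topple y η) = H.topple y (H.topple x η) := by
  funext z
  have hsymm := H.symm x y
  unfold topple
  split_ifs <;> subst_vars <;> simp_all <;> omega

lemma toppleList_append : ∀ (l₁ l₂ : List V) (η : V → ℕ),
    H.toppleList η (l₁ ++ l₂) = H.toppleList (H.toppleList η l₁) l₂ := by
  intro l₁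
  induction l₁ with
  | nil => intro l₂ η; rfl
  | cons v l₁ ih => intro l₂ η; exact ih l₂ (H.topple v η)

lemma legalSeq_append : ∀ (l₁ l₂ : List V) (η : V → ℕ),
    H.LegalSeq η (l₁ ++ l₂) ↔ H.LegalSeq η l₁ ∧ H.LegalSeq (H.toppleList η l₁) l₂ := by
  intro l₁
  induction l₁ with
  | nil => intro l₂ η; simp [LegalSeq, toppleList]
  | cons v l₁ ih =>
      intro l₂ η
      simp only [List.cons_append, LegalSeq, toppleList, List.append_eq, ih]
      tauto

lemma legal_moveFront {y : V} (hy : y ≠ H.sink) :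
    ∀ (a : List V) (η : V → ℕ) (b : List V), y ∉ a → H.deg y ≤ η y →
    H.LegalSeq η (a ++ y :: b) →
    H.LegalSeq η (y :: (a ++ b)) ∧
      H.toppleList η (a ++ y :: b) = H.toppleList η (y :: (a ++ b)) := by
  intro a
  induction a with
  | nil => intro η b _ _ hleg; exact ⟨hleg, rfl⟩
  | cons v a ih =>
      intro η b hya hey hleg
      obtain ⟨hvs, hve, hleg'⟩ := hleg
      have hyv : y ≠ v := fun h => hya (h ▸ (List.mem_cons_self : v ∈ v :: a))
      have hya' : y ∉ a := fun h => hya (List.mem_cons_of_mem _ h)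
      have hey' : H.deg y ≤ H.topple v η y := le_trans hey (H.le_topple v η hyv)
      obtain ⟨⟨_, _, hlg2⟩, heq⟩ := ih (H.topple v η) b hya' hey' hleg'
      have hcomm : H.topple y (H.topple v η) = H.topple v (H.topple y η) :=
        H.topple_comm hyv hy hvs η hey hve
      have hvy : v ≠ y := fun h => hyv h.symm
      have hve' : H.deg v ≤ H.topple y η v := le_trans hve (H.le_topple y η hvy)
      constructor
      · exact ⟨hy, hey, hvs, hve', by rw [← hcomm]; exact hlg2⟩
      · show H.toppleList (H.topple v η) (a ++ y :: b)
            = H.toppleList (H.topple v (H.topple y η)) (a ++ b)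
        rw [heq]
        show H.toppleList (H.topple y (H.topple v η)) (a ++ b)
            = H.toppleList (H.topple v (H.topple y η)) (a ++ b)
        rw [hcomm]

lemma exists_split {z : V} : ∀ {l : List V}, z ∈ l → ∃ a b, l = a ++ z :: b ∧ z ∉ a := by
  intro l
  induction l with
  | nil => intro h; exact absurd h (List.not_mem_nil : z ∉ [])
  | cons v l ih =>
      intro h
      by_cases hzv : z = v
      · exact ⟨[], l, by rw [hzv]; rfl, (List.not_mem_nil : z ∉ [])⟩
      · obtain ⟨a, b, rfl, hza⟩ := ih (by
          rcases List.mem_cons.mp h with h | h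
          · exact absurd h hzv
          · exact h)
        exact ⟨v :: a, b, rfl, by
          intro hm
          rcases List.mem_cons.mp hm with h' | h'
          · exact hzv h'
          · exact hza h'⟩

lemma count_le_of_legal : ∀ (m : List V) (η : V → ℕ) (l : List V),
    H.LegalSeq η m → H.LegalSeq η l → H.Stable (H.toppleList η l) →
    ∀ y, m.count y ≤ l.count y := by
  intro m
  induction m with
  | nil => intro η l _ _ _ y; simp
  | cons z m ih =>
      intro η l hm hl hst y
      obtain ⟨hzs, hze, hm'⟩ := hm
      have hzl : z ∈ l := by
        by_contra hzl
        exact absurd (lt_of_le_of_lt (le_trans hze (H.le_toppleList l η hzl))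
          (hst z hzs)) (lt_irrefl _)
      obtain ⟨a, b, rfl, hza⟩ := exists_split hzl
      obtain ⟨hleg2, heq⟩ := H.legal_moveFront hzs a η b hza hze hl
      obtain ⟨_, _, hleg3⟩ := hleg2
      have hst' : H.Stable (H.toppleList (H.topple z η) (a ++ b)) := by
        have : H.toppleList η (a ++ z :: b) = H.toppleList (H.topple z η) (a ++ b) := heq
        rw [this] at hst
        exact hst
      have hcount := ih (H.topple z η) (a ++ b) hm' hleg3 hst' y
      have hperm : (a ++ z :: b).count y = (z :: (a ++ b)).count y :=
        (List.perm_middle).count_eq y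
      rw [hperm]
      simp only [List.count_cons]
      omega

lemma count_eq_of_legal_stable (m l : List V) (η : V → ℕ)
    (hm : H.LegalSeq η m) (hms : H.Stable (H.toppleList η m))
    (hl : H.LegalSeq η l) (hls : H.Stable (H.toppleList η l)) :
    ∀ y, m.count y = l.count y := fun y =>
  le_antisymm (H.count_le_of_legal m η l hm hl hls y)
    (H.count_le_of_legal l η m hl hm hms y)


end SandpileGraph

/-- The wave decomposition of the stabilization of `η`: repeatedly carry out waves
(toppling `x` exactly once per wave) while `x` is unstable, ending at a stable
configuration. -/
inductive IsWaveDecomp {V : Type*} [Fintype V] [DecidableEq V] (H : SandpileGraph V) (x : V) :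
    (V → ℕ) → List (List V) → Prop
  | nil (η : V → ℕ) : H.Stable η → IsWaveDecomp H x η []
  | cons (η : V → ℕ) (w : List V) (ws : List (List V)) :
      H.deg x ≤ η x → H.IsWaveList x η w →
      IsWaveDecomp H x (H.toppleList η w) ws → IsWaveDecomp H x η (w :: ws)


open SandpileGraph in
lemma waveDecomp_join {V : Type*} [Fintype V] [DecidableEq V] {H : SandpileGraph V} {x : V}
    {η : V → ℕ} {Ws : List (List V)} (h : IsWaveDecomp H x η Ws) :
    H.LegalSeq η Ws.flatten ∧ H.Stable (H.toppleList η Ws.flatten) ∧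
      (∀ y, Ws.countP (fun w => decide (y ∈ w)) = Ws.flatten.count y) ∧
      Ws.length = Ws.flatten.count x := by
  induction h with
  | nil η hst => exact ⟨trivial, hst, fun y => rfl, rfl⟩
  | cons η w ws hdeg hw hws ih =>
      obtain ⟨hnd, hxw, hlegw, _⟩ := hw
      obtain ⟨ih1, ih2, ih3, ih4⟩ := ih
      have hjoin : (w :: ws).flatten = w ++ ws.flatten := by simp [List.flatten]
      refine ⟨?_, ?_, ?_, ?_⟩
      · rw [hjoin, H.legalSeq_append]
        exact ⟨hlegw, ih1⟩
      · rw [hjoin, H.toppleList_append]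
        exact ih2
      · intro y
        rw [hjoin, List.count_append, List.countP_cons]
        by_cases hyw : y ∈ w
        · rw [List.count_eq_one_of_mem hnd hyw]
          simp [hyw, ih3 y]
          omega
        · rw [List.count_eq_zero_of_not_mem hyw]
          simp [hyw, ih3 y]
      · rw [hjoin, List.count_append, List.count_eq_one_of_mem hnd hxw]
        simp [ih4]
        omega

open SandpileGraph in
/-- **Waves and toppling numbers.**  If `η` is stable and `η x = deg x - 1`, then for the wave
decomposition `Ws` of the stabilization of `η + 1_x` and any legal stabilizing toppling
sequence `l` of `η + 1_x`: every `y ∈ U` belongs to exactly `n(x,y;η) = l.count y` of the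
waves, and the number of waves equals `n(x,x;η) = l.count x`. -/
theorem waves_count_eq_toppling_numbers
    {V : Type*} [Fintype V] [DecidableEq V] (H : SandpileGraph V)
    (η : V → ℕ) (hηstable : H.Stable η)
    (x : V) (hx : x ≠ H.sink) (hηx : η x = H.deg x - 1)
    (Ws : List (List V)) (hWs : IsWaveDecomp H x (addGrain x η) Ws)
    (l : List V) (hleg : H.LegalSeq (addGrain x η) l)
    (hstab : H.Stable (H.toppleList (addGrain x η) l)) :
    (∀ y : V, y ≠ H.sink → Ws.countP (fun w => decide (y ∈ w)) = l.count y) ∧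
      Ws.length = l.count x := by
  obtain ⟨hjleg, hjstab, hjc, hjlen⟩ := waveDecomp_join hWs
  have hcnt := H.count_eq_of_legal_stable Ws.flatten l (addGrain x η) hjleg hjstab hleg hstab
  exact ⟨fun y _ => (hjc y).trans (hcnt y), hjlen.trans (hcnt x)⟩
end

section
/- Let d ≥ 1 and let μ be a probability measure on spanning forests of the nearest-neighbour lattice ℤ^d that is invariant under all translations of ℤ^d and such that μ-almost surely every component is an infinite tree with one end. For x ∈ ℤ^d write T_x for the component containing x, past_x for the set of vertices y such that the unique infinite self-avoiding path in T_y started at y passes through x, D_x(r) for the ℓ∞-ball of radius r around x, and diam(A) = sup{ ‖v − o‖∞ : v ∈ A }. Then for every r ≥ 1: μ( diam(past_o) > r ) ≥ Σ_{x : r < ‖x‖∞ ≤ 2r} μ( o ∈ past_x )² / E_μ[ |T_o ∩ D_o(4r)| · 1_{o ∈ past_x} ], where a summand is interpreted as 0 if μ( o ∈ past_x ) = 0. -/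
open MeasureTheory
open scoped ENNReal

/-!
Mass-transport lower bound for the diameter of the past: for a translation-invariant
probability measure `μ` on spanning forests of `ℤ^d` whose components are a.s. infinite
one-ended trees,
`μ(diam(past_o) > r) ≥ Σ_{r < ‖x‖∞ ≤ 2r} μ(o ∈ past_x)² / E_μ[|T_o ∩ D_o(4r)|·1_{o ∈ past_x}]`.
-/

abbrev Pt (d : ℕ) := Fin d → ℤ

/-- Lattice adjacency on `ℤ^d`. -/
def adjPt {d : ℕ} (x y : Pt d) : Prop := (∑ i, (x i - y i).natAbs) = 1

/-- ℓ∞ norm of a lattice point. -/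
def linf {d : ℕ} (x : Pt d) : ℕ := Finset.univ.sup fun i => (x i).natAbs

/-- An (unordered) pair of lattice points is a lattice edge if its endpoints are adjacent. -/
def latticeEdge {d : ℕ} (ed : Sym2 (Pt d)) : Prop := ∃ x y : Pt d, adjPt x y ∧ ed = s(x, y)

/-- Configurations of edges: a subgraph of `ℤ^d` is encoded by the indicator of its edge
set. -/
abbrev EdgeCfg (d : ℕ) := Sym2 (Pt d) → Bool

/-- The simple graph on `ℤ^d` determined by an edge configuration. -/
def cfgGraph (d : ℕ) (ω : EdgeCfg d) : SimpleGraph (Pt d) where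
  Adj a b := a ≠ b ∧ ω s(a, b) = true
  symm := by
    constructor
    intro a b hab
    exact ⟨hab.1.symm, by rw [Sym2.eq_swap]; exact hab.2⟩
  loopless := by constructor; intro a ha; exact ha.1 rfl

/-- An infinite self-avoiding path (ray) from `y` in the configuration `ω`. -/
def IsRay (d : ℕ) (ω : EdgeCfg d) (y : Pt d) (γ : ℕ → Pt d) : Prop :=
  γ 0 = y ∧ Function.Injective γ ∧ ∀ n, (cfgGraph d ω).Adj (γ n) (γ (n + 1))

/-- `ω` is a spanning forest of `ℤ^d` all of whose components are infinite trees with one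
end: only lattice edges are present, there are no cycles, every component is infinite, and
any two rays in the same component have finite symmetric difference. -/
def IsOneEndedForest (d : ℕ) (ω : EdgeCfg d) : Prop :=
  (∀ ed : Sym2 (Pt d), ω ed = true → latticeEdge ed) ∧
  (cfgGraph d ω).IsAcyclic ∧
  (∀ x : Pt d, {y : Pt d | (cfgGraph d ω).Reachable x y}.Infinite) ∧
  ∀ (y₁ y₂ : Pt d) (γ₁ γ₂ : ℕ → Pt d), IsRay d ω y₁ γ₁ → IsRay d ω y₂ γ₂ →
    (cfgGraph d ω).Reachable y₁ y₂ →
      (symmDiff (Set.range γ₁) (Set.range γ₂)).Finite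

/-- The component `T_x` of `x`. -/
def compOf (d : ℕ) (ω : EdgeCfg d) (x : Pt d) : Set (Pt d) :=
  {y | (cfgGraph d ω).Reachable x y}

/-- The past of `x`: the set of `y` whose (unique) ray passes through `x`. -/
def pastOf (d : ℕ) (ω : EdgeCfg d) (x : Pt d) : Set (Pt d) :=
  {y | ∃ γ : ℕ → Pt d, IsRay d ω y γ ∧ x ∈ Set.range γ}

/-- Translation of an edge configuration by the lattice vector `v`. -/
def shiftCfg (d : ℕ) (v : Pt d) (ω : EdgeCfg d) : EdgeCfg d :=
  fun ed => ω (Sym2.map (fun p => p - v) ed)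

/-! ### Auxiliary development -/

section Aux
variable {d : ℕ}

lemma linf_le_iff {x : Pt d} {R : ℕ} : linf x ≤ R ↔ ∀ i, (x i).natAbs ≤ R := by
  simp [linf, Finset.sup_le_iff]

lemma linf_neg (x : Pt d) : linf (-x) = linf x := by
  simp [linf, Int.natAbs_neg]

lemma linf_add_le (a b : Pt d) : linf (a + b) ≤ linf a + linf b := by
  rw [linf_le_iff]
  intro i
  exact le_trans (Int.natAbs_add_le (a i) (b i))
    (add_le_add (Finset.le_sup (f := fun i => (a i).natAbs) (Finset.mem_univ i))
      (Finset.le_sup (f := fun i => (b i).natAbs) (Finset.mem_univ i)))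

lemma ball_finite0 (R : ℕ) : {p : Pt d | linf p ≤ R}.Finite := by
  have h : {p : Pt d | linf p ≤ R} ⊆ Set.pi Set.univ (fun _ : Fin d => Set.Icc (-(R:ℤ)) R) := by
    intro p hp i _
    have := linf_le_iff.1 hp i
    have habs : |p i| ≤ (R : ℤ) := by
      rw [Int.abs_eq_natAbs]
      exact_mod_cast this
    exact abs_le.1 habs
  exact Set.Finite.subset (Set.Finite.pi (fun i => Set.finite_Icc _ _)) h

lemma ball_finite (c : Pt d) (R : ℕ) : {p : Pt d | linf (p - c) ≤ R}.Finite := by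
  have h : {p : Pt d | linf (p - c) ≤ R} = (fun q => q + c) '' {p : Pt d | linf p ≤ R} := by
    ext p
    constructor
    · intro hp; exact ⟨p - c, hp, by ring⟩
    · rintro ⟨q, hq, rfl⟩; simpa using hq
  rw [h]
  exact (ball_finite0 R).image _

lemma adjPt_symm {x y : Pt d} (h : adjPt x y) : adjPt y x := by
  unfold adjPt at *
  rw [← h]
  apply Finset.sum_congr rfl
  intro i _
  rw [← Int.natAbs_neg]
  ring_nf

lemma adjPt_linf {x y : Pt d} (h : adjPt x y) : linf (x - y) ≤ 1 := by
  rw [linf_le_iff]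
  intro i
  have : (x i - y i).natAbs ≤ ∑ j, (x j - y j).natAbs :=
    Finset.single_le_sum (f := fun j => (x j - y j).natAbs) (fun j _ => Nat.zero_le _)
      (Finset.mem_univ i)
  exact le_of_le_of_eq this h

lemma adj_lattice {ω : EdgeCfg d} (h1 : ∀ ed : Sym2 (Pt d), ω ed = true → latticeEdge ed)
    {a b : Pt d} (hab : (cfgGraph d ω).Adj a b) : adjPt a b := by
  obtain ⟨x, y, hxy, he⟩ := h1 _ hab.2
  rw [Sym2.eq_iff] at he
  rcases he with ⟨rfl, rfl⟩ | ⟨rfl, rfl⟩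
  · exact hxy
  · exact adjPt_symm hxy

lemma nbhd_finite {ω : EdgeCfg d} (h1 : ∀ ed : Sym2 (Pt d), ω ed = true → latticeEdge ed)
    (c : Pt d) : {w : Pt d | (cfgGraph d ω).Adj c w}.Finite := by
  apply (ball_finite c 1).subset
  intro w hw
  have := adjPt_linf (adjPt_symm (adj_lattice h1 hw))
  simpa using this

/-- Reachability avoiding a forbidden set `F` (both endpoints and the whole walk avoid `F`). -/
inductive RA (ω : EdgeCfg d) (F : Set (Pt d)) : Pt d → Pt d → Prop
  | refl (a : Pt d) (ha : a ∉ F) : RA ω F a a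
  | tail {a b c : Pt d} (h : RA ω F a b) (hbc : (cfgGraph d ω).Adj b c) (hc : c ∉ F) :
      RA ω F a c

namespace RA

variable {ω : EdgeCfg d} {F : Set (Pt d)}

lemma start_not_mem {a z : Pt d} (h : RA ω F a z) : a ∉ F := by
  induction h with
  | refl ha => exact ha
  | tail h hbc hc ih => exact ih

lemma end_not_mem {a z : Pt d} (h : RA ω F a z) : z ∉ F := by
  cases h with
  | refl ha => exact ha
  | tail h hbc hc => exact hc

lemma reachable {a z : Pt d} (h : RA ω F a z) : (cfgGraph d ω).Reachable a z := by
  induction h with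
  | refl ha => exact SimpleGraph.Reachable.refl a
  | tail h hbc hc ih => exact ih.trans hbc.reachable

lemma mono {F' : Set (Pt d)} (hF : F' ⊆ F) {a z : Pt d} (h : RA ω F a z) : RA ω F' a z := by
  induction h with
  | refl ha => exact RA.refl _ (fun h => ha (hF h))
  | tail h hbc hc ih => exact RA.tail ih hbc (fun h => hc (hF h))

lemma head {a b z : Pt d} (ha : a ∉ F) (hab : (cfgGraph d ω).Adj a b) (h : RA ω F b z) :
    RA ω F a z := by
  induction h with
  | refl hb => exact RA.tail (RA.refl _ ha) hab hb
  | tail h hbc hc ih => exact RA.tail ih hbc hc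

lemma of_reachable {a z : Pt d} (h : (cfgGraph d ω).Reachable a z) : RA ω ∅ a z := by
  obtain ⟨w⟩ := h
  induction w with
  | nil => exact RA.refl _ (Set.notMem_empty _)
  | cons hadj p ih => exact RA.head (Set.notMem_empty _) hadj ih

lemma reachable_iff_RA {a z : Pt d} :
    (cfgGraph d ω).Reachable a z ↔ RA ω ∅ a z :=
  ⟨of_reachable, reachable⟩

/-- Walk surgery: from a walk avoiding `F`, with endpoint different from the start, extract the
last visit to the start and obtain a first step `w` together with a walk from `w` avoiding
`F ∪ {a}`. -/
lemma head_tail {a z : Pt d} (h : RA ω F a z) (hz : z ≠ a) :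
    ∃ w : Pt d, (cfgGraph d ω).Adj a w ∧ RA ω (insert a F) w z := by
  induction h with
  | refl hb => exact absurd rfl hz
  | tail h hbc hc ih =>
    rename_i b c
    by_cases hba : b = a
    · subst hba
      refine ⟨c, hbc, RA.refl c ?_⟩
      simp only [Set.mem_insert_iff]
      push_neg
      exact ⟨hz, hc⟩
    · obtain ⟨w, haw, hw⟩ := ih hba
      refine ⟨w, haw, RA.tail hw hbc ?_⟩
      simp only [Set.mem_insert_iff]
      push_neg
      exact ⟨hz, hc⟩

end RA

end Aux

section Koenig
variable {d : ℕ} {ω : EdgeCfg d}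

lemma exists_next (h1 : ∀ ed : Sym2 (Pt d), ω ed = true → latticeEdge ed)
    {F : Set (Pt d)} {c : Pt d} (hc : {z | RA ω F c z}.Infinite) :
    ∃ w, (cfgGraph d ω).Adj c w ∧ {z | RA ω (insert c F) w z}.Infinite := by
  by_contra hcon
  push_neg at hcon
  have cover : {z | RA ω F c z} ⊆
      insert c (⋃ w ∈ {w : Pt d | (cfgGraph d ω).Adj c w}, {z | RA ω (insert c F) w z}) := by
    intro z hz
    by_cases hzc : z = c
    · exact hzc ▸ Set.mem_insert _ _
    · obtain ⟨w, haw, hw⟩ := RA.head_tail hz hzc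
      exact Set.mem_insert_iff.2 (Or.inr (Set.mem_biUnion haw hw))
  exact hc (Set.Finite.subset
    (Set.Finite.insert c ((nbhd_finite h1 c).biUnion
      (fun w hw => hcon w hw))) cover)

lemma koenig (h1 : ∀ ed : Sym2 (Pt d), ω ed = true → latticeEdge ed)
    {F : Set (Pt d)} {y : Pt d}
    (hinf : {z | RA ω F y z}.Infinite) :
    ∃ γ : ℕ → Pt d, IsRay d ω y γ ∧ ∀ n, γ n ∉ F := by
  classical
  set Good : Set (Pt d) × Pt d → Prop := fun p => {z | RA ω p.1 p.2 z}.Infinite with hGood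
  have key : ∀ p : Set (Pt d) × Pt d, Good p →
      ∃ w, (cfgGraph d ω).Adj p.2 w ∧ Good (insert p.2 p.1, w) :=
    fun p hp => exists_next h1 hp
  let T := {p : Set (Pt d) × Pt d // Good p}
  let step : T → T := fun p =>
    ⟨(insert p.1.2 p.1.1, Classical.choose (key p.1 p.2)),
      (Classical.choose_spec (key p.1 p.2)).2⟩
  let seq : ℕ → T := fun n => step^[n] ⟨(F, y), hinf⟩
  let γ : ℕ → Pt d := fun n => (seq n).1.2
  let Sn : ℕ → Set (Pt d) := fun n => (seq n).1.1
  have h_succ : ∀ n, seq (n + 1) = step (seq n) := fun n =>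
    Function.iterate_succ_apply' step n _
  have hS : ∀ n, Sn (n + 1) = insert (γ n) (Sn n) := by
    intro n; show (seq (n+1)).1.1 = _; rw [h_succ]
  have hadj : ∀ n, (cfgGraph d ω).Adj (γ n) (γ (n + 1)) := by
    intro n
    show (cfgGraph d ω).Adj (seq n).1.2 (seq (n+1)).1.2
    rw [h_succ]
    exact (Classical.choose_spec (key (seq n).1 (seq n).2)).1
  have hnot : ∀ n, γ n ∉ Sn n := by
    intro n
    obtain ⟨z, hz⟩ := Set.Infinite.nonempty (seq n).2
    exact RA.start_not_mem hz
  have hmono : ∀ m n, m ≤ n → Sn m ⊆ Sn n := by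
    intro m n hmn
    induction n with
    | zero => exact Nat.le_zero.mp hmn ▸ subset_rfl
    | succ k ih =>
      rcases Nat.lt_or_ge m (k+1) with h | h
      · exact (ih (Nat.lt_succ_iff.mp h)).trans (by rw [hS]; exact Set.subset_insert _ _)
      · exact le_antisymm hmn h ▸ subset_rfl
  have hmem : ∀ n, γ n ∈ Sn (n + 1) := fun n => by rw [hS]; exact Set.mem_insert _ _
  have hne : ∀ m n, m < n → γ m ≠ γ n := by
    intro m n hmn heq
    exact hnot n (heq ▸ hmono (m+1) n hmn (hmem m))
  have hinj : Function.Injective γ := by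
    intro m n heq
    by_contra hne'
    rcases Nat.lt_or_ge m n with h | h
    · exact hne m n h heq
    · exact hne n m (lt_of_le_of_ne h (Ne.symm hne')) heq.symm
  have hF0 : Sn 0 = F := rfl
  refine ⟨γ, ⟨rfl, hinj, hadj⟩, fun n => fun hmem' => hnot n (hmono 0 n (Nat.zero_le n) ?_)⟩
  rw [hF0]; exact hmem'
section Rays
variable {d : ℕ} {ω : EdgeCfg d}

lemma ray_reachable {y : Pt d} {γ : ℕ → Pt d} (hγ : IsRay d ω y γ) (n : ℕ) :
    (cfgGraph d ω).Reachable y (γ n) := by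
  induction n with
  | zero => rw [hγ.1]
  | succ k ih => exact ih.trans (hγ.2.2 k).reachable

lemma RA_of_ray_prefix {F : Set (Pt d)} {y : Pt d} {γ : ℕ → Pt d} (hγ : IsRay d ω y γ)
    (m : ℕ) (h : ∀ k ≤ m, γ k ∉ F) : RA ω F y (γ m) := by
  induction m with
  | zero => rw [← hγ.1]; exact hγ.1 ▸ RA.refl _ (hγ.1 ▸ h 0 le_rfl)
  | succ k ih =>
    exact RA.tail (ih (fun j hj => h j (hj.trans (Nat.le_succ k)))) (hγ.2.2 k)
      (h (k+1) le_rfl)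

/-- Walk along a sequence of adjacent vertices. -/
def walkSeg {V : Type*} {G : SimpleGraph V} (γ : ℕ → V) (hadj : ∀ n, G.Adj (γ n) (γ (n + 1)))
    (s : ℕ) : (n : ℕ) → G.Walk (γ s) (γ (s + n))
  | 0 => SimpleGraph.Walk.nil
  | n + 1 => (walkSeg γ hadj s n).concat (hadj (s + n))

lemma walkSeg_support {V : Type*} {G : SimpleGraph V} (γ : ℕ → V)
    (hadj : ∀ n, G.Adj (γ n) (γ (n + 1))) (s : ℕ) (n : ℕ) :
    (walkSeg γ hadj s n).support = (List.range (n + 1)).map (fun k => γ (s + k)) := by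
  induction n with
  | zero => rw [List.range_succ]; simp [walkSeg]
  | succ k ih =>
    rw [show walkSeg γ hadj s (k+1) = (walkSeg γ hadj s k).concat (hadj (s + k)) from rfl,
      SimpleGraph.Walk.support_concat, ih, List.range_succ (n := k + 1)]
    simp

lemma walkSeg_isPath {V : Type*} {G : SimpleGraph V} {γ : ℕ → V}
    (hadj : ∀ n, G.Adj (γ n) (γ (n + 1))) (hinj : Function.Injective γ) (s n : ℕ) :
    (walkSeg γ hadj s n).IsPath := by
  rw [SimpleGraph.Walk.isPath_def, walkSeg_support]
  exact List.Nodup.map (fun a b hab => by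
    have := hinj hab; omega) List.nodup_range

lemma ray_unique (hforest : IsOneEndedForest d ω) {y : Pt d} {γ δ : ℕ → Pt d}
    (hγ : IsRay d ω y γ) (hδ : IsRay d ω y δ) : γ = δ := by
  classical
  by_contra hne
  have hex : ∃ n, γ n ≠ δ n := by
    by_contra h; push_neg at h; exact hne (funext h)
  let n₀ := Nat.find hex
  have hn₀ : γ n₀ ≠ δ n₀ := Nat.find_spec hex
  have hlt : ∀ k < n₀, γ k = δ k := fun k hk => not_not.mp (Nat.find_min hex hk)
  have hpos : 1 ≤ n₀ := by
    by_contra h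
    have h0 : n₀ = 0 := by omega
    exact hn₀ (by rw [h0, hγ.1, hδ.1])
  have hstart : γ (n₀ - 1) = δ (n₀ - 1) := hlt _ (by omega)
  have claim1 : ∀ a b, n₀ ≤ a → n₀ ≤ b → γ a ≠ δ b := by
    intro a b ha hb heq
    have ea : (n₀ - 1) + (a - (n₀ - 1)) = a := by omega
    have eb : (n₀ - 1) + (b - (n₀ - 1)) = b := by omega
    set P := ((walkSeg γ hγ.2.2 (n₀ - 1) (a - (n₀ - 1))).copy rfl
      (congrArg γ ea)) with hP
    set Q := ((walkSeg δ hδ.2.2 (n₀ - 1) (b - (n₀ - 1))).copy hstart.symm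
      (heq ▸ congrArg δ eb)) with hQ
    have hPp : P.IsPath := by
      rw [hP, SimpleGraph.Walk.isPath_copy]; exact walkSeg_isPath _ hγ.2.1 _ _
    have hQp : Q.IsPath := by
      rw [hQ, SimpleGraph.Walk.isPath_copy]; exact walkSeg_isPath _ hδ.2.1 _ _
    have hPQ : P = Q := by
      have := (SimpleGraph.isAcyclic_iff_path_unique.mp hforest.2.1)
        (⟨P, hPp⟩ : (cfgGraph d ω).Path _ _) ⟨Q, hQp⟩
      exact congrArg Subtype.val this
    have hsup : P.support = Q.support := congrArg SimpleGraph.Walk.support hPQ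
    rw [hP, hQ, SimpleGraph.Walk.support_copy, SimpleGraph.Walk.support_copy,
      walkSeg_support, walkSeg_support] at hsup
    have h2 := congrArg (fun l => l[1]?) hsup
    simp only [List.getElem?_map] at h2
    rw [List.getElem?_range (by omega), List.getElem?_range (by omega)] at h2
    simp only [Option.map_some] at h2
    have : γ (n₀ - 1 + 1) = δ (n₀ - 1 + 1) := Option.some.inj h2
    rw [show n₀ - 1 + 1 = n₀ by omega] at this
    exact hn₀ this
  have hsub : γ '' (Set.Ici n₀) ⊆ symmDiff (Set.range γ) (Set.range δ) := by
    rintro z ⟨a, ha, rfl⟩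
    rw [Set.mem_symmDiff]
    left
    refine ⟨⟨a, rfl⟩, ?_⟩
    rintro ⟨b, hb⟩
    rcases Nat.lt_or_ge b n₀ with h | h
    · have : γ b = γ a := by rw [hlt b h]; exact hb
      have hba := hγ.2.1 this
      have ha' : n₀ ≤ a := ha
      omega
    · exact claim1 a b ha h hb.symm
  have hinf : (γ '' (Set.Ici n₀)).Infinite :=
    Set.Infinite.image hγ.2.1.injOn (Set.Ici_infinite n₀)
  exact hinf ((hforest.2.2.2 y y γ δ hγ hδ (SimpleGraph.Reachable.refl y)).subset hsub)
section Char
variable {d : ℕ} {ω : EdgeCfg d}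

lemma past_iff (hforest : IsOneEndedForest d ω) {a y : Pt d} (hay : a ≠ y) :
    y ∈ pastOf d ω a ↔
      ((cfgGraph d ω).Reachable a y ∧ {z | RA ω {a} y z}.Finite) := by
  constructor
  · rintro ⟨γ, hγ, hmem⟩
    obtain ⟨k, hk⟩ := hmem
    constructor
    · have := ray_reachable hγ k
      rw [hk] at this
      exact this.symm
    · by_contra hinfin
      rw [← Set.not_infinite, not_not] at hinfin
      obtain ⟨δ, hδ, hav⟩ := koenig hforest.1 hinfin
      have heq : γ = δ := ray_unique hforest hγ hδ
      exact hav k (by rw [← heq, hk]; exact Set.mem_singleton a)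
  · rintro ⟨hreach, hfin⟩
    have hcomp : {z | RA ω (∅ : Set (Pt d)) y z}.Infinite := by
      have h := hforest.2.2.1 y
      have : {z | (cfgGraph d ω).Reachable y z} = {z | RA ω ∅ y z} :=
        Set.ext fun z => RA.reachable_iff_RA
      rwa [this] at h
    obtain ⟨γ, hγ, -⟩ := koenig hforest.1 hcomp
    have hrange : (Set.range γ).Infinite := Set.infinite_range_of_injective hγ.2.1
    have hns : ¬(Set.range γ ⊆ {z | RA ω {a} y z}) := fun hsub => hrange (hfin.subset hsub)
    obtain ⟨z, hz1, hz2⟩ := Set.not_subset.mp hns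
    obtain ⟨m, rfl⟩ := hz1
    by_contra hnot
    have hka : ∀ k, γ k ≠ a := fun k hk => hnot ⟨γ, hγ, k, hk⟩
    exact hz2 (RA_of_ray_prefix hγ m (fun k _ => by simpa using hka k))

lemma finite_RA_iff {a y : Pt d} (hay : a ≠ y) :
    {z | RA ω {a} y z}.Finite ↔
      ∃ S : Finset (Pt d), y ∈ S ∧ a ∉ S ∧
        ∀ p ∈ S, ∀ q : Pt d, q ∉ S → q ≠ a → ¬(cfgGraph d ω).Adj p q := by
  classical
  constructor
  · intro hfin
    refine ⟨hfin.toFinset, ?_, ?_, ?_⟩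
    · rw [Set.Finite.mem_toFinset]
      exact RA.refl y (by simp [Ne.symm hay])
    · rw [Set.Finite.mem_toFinset]
      intro h
      exact (RA.end_not_mem h) rfl
    · intro p hp q hq hqa hadj
      rw [Set.Finite.mem_toFinset] at hp hq
      exact hq (RA.tail hp hadj (by simp [hqa]))
  · rintro ⟨S, hy, ha, hcl⟩
    apply Set.Finite.subset S.finite_toSet
    intro z hz
    induction hz with
    | refl h => exact hy
    | tail h hbc hc ih =>
      rename_i b c
      by_contra hcS
      exact hcl b ih c hcS (by simpa using hc) hbc

/-- On forests, membership in the past is equivalent to a Borel condition. -/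
lemma past_iff' (hforest : IsOneEndedForest d ω) {a y : Pt d} (hay : a ≠ y) :
    y ∈ pastOf d ω a ↔
      ((cfgGraph d ω).Reachable a y ∧
        ∃ S : Finset (Pt d), y ∈ S ∧ a ∉ S ∧
          ∀ p ∈ S, ∀ q : Pt d, q ∉ S → q ≠ a → ¬(cfgGraph d ω).Adj p q) := by
  rw [past_iff hforest hay, finite_RA_iff hay]

end Char
section Meas
variable {d : ℕ}

lemma measurable_adjEvent (p q : Pt d) :
    MeasurableSet {ω : EdgeCfg d | (cfgGraph d ω).Adj p q} := by
  by_cases h : p = q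
  · have : {ω : EdgeCfg d | (cfgGraph d ω).Adj p q} = ∅ := by
      ext ω; simp [cfgGraph, h]
    rw [this]; exact MeasurableSet.empty
  · have : {ω : EdgeCfg d | (cfgGraph d ω).Adj p q} = (fun ω : EdgeCfg d => ω s(p, q)) ⁻¹' {true} := by
      ext ω; simp [cfgGraph, h]
    rw [this]
    exact (measurable_pi_apply _) (measurableSet_singleton true)

/-- `RA` in at most `n` steps. -/
def RAn (ω : EdgeCfg d) (F : Set (Pt d)) (a : Pt d) : ℕ → Pt d → Prop
  | 0, z => a = z ∧ a ∉ F
  | (n+1), z => RAn ω F a n z ∨ ∃ b, RAn ω F a n b ∧ (cfgGraph d ω).Adj b z ∧ z ∉ F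

lemma RA_iff_RAn {ω : EdgeCfg d} {F : Set (Pt d)} {a z : Pt d} :
    RA ω F a z ↔ ∃ n, RAn ω F a n z := by
  constructor
  · intro h
    induction h with
    | refl ha => exact ⟨0, rfl, ha⟩
    | tail h hbc hc ih =>
      obtain ⟨n, hn⟩ := ih
      exact ⟨n + 1, Or.inr ⟨_, hn, hbc, hc⟩⟩
  · rintro ⟨n, hn⟩
    induction n generalizing z with
    | zero => obtain ⟨rfl, ha⟩ := hn; exact RA.refl _ ha
    | succ k ih =>
      rcases hn with h | ⟨b, hb, hadj, hz⟩
      · exact ih h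
      · exact RA.tail (ih hb) hadj hz

lemma measurable_RAn (F : Set (Pt d)) (a : Pt d) (n : ℕ) (z : Pt d) :
    MeasurableSet {ω : EdgeCfg d | RAn ω F a n z} := by
  induction n generalizing z with
  | zero =>
    by_cases h : a = z ∧ a ∉ F
    · have : {ω : EdgeCfg d | RAn ω F a 0 z} = Set.univ := by
        ext ω; simpa [RAn] using h
      rw [this]; exact MeasurableSet.univ
    · have : {ω : EdgeCfg d | RAn ω F a 0 z} = ∅ := by
        ext ω; simpa [RAn] using h
      rw [this]; exact MeasurableSet.empty
  | succ k ih =>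
    by_cases hz : z ∈ F
    · have : {ω : EdgeCfg d | RAn ω F a (k+1) z} = {ω | RAn ω F a k z} := by
        ext ω
        simp only [Set.mem_setOf_eq, RAn]
        constructor
        · rintro (h | ⟨b, hb, hadj, hz'⟩)
          · exact h
          · exact absurd hz hz'
        · exact Or.inl
      rw [this]; exact ih z
    · have : {ω : EdgeCfg d | RAn ω F a (k+1) z} =
        {ω | RAn ω F a k z} ∪ ⋃ b : Pt d,
          ({ω | RAn ω F a k b} ∩ {ω | (cfgGraph d ω).Adj b z}) := by
        ext ω
        simp only [Set.mem_setOf_eq, RAn, Set.mem_union, Set.mem_iUnion, Set.mem_inter_iff]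
        constructor
        · rintro (h | ⟨b, hb, hadj, hz'⟩)
          · exact Or.inl h
          · exact Or.inr ⟨b, hb, hadj⟩
        · rintro (h | ⟨b, hb, hadj⟩)
          · exact Or.inl h
          · exact Or.inr ⟨b, hb, hadj, hz⟩
      rw [this]
      exact (ih z).union (MeasurableSet.iUnion fun b => (ih b).inter (measurable_adjEvent b z))

lemma measurable_RA (F : Set (Pt d)) (a z : Pt d) :
    MeasurableSet {ω : EdgeCfg d | RA ω F a z} := by
  have : {ω : EdgeCfg d | RA ω F a z} = ⋃ n, {ω | RAn ω F a n z} := by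
    ext ω; simpa [Set.mem_iUnion] using RA_iff_RAn
  rw [this]
  exact MeasurableSet.iUnion fun n => measurable_RAn F a n z

lemma measurable_reach (a z : Pt d) :
    MeasurableSet {ω : EdgeCfg d | (cfgGraph d ω).Reachable a z} := by
  have : {ω : EdgeCfg d | (cfgGraph d ω).Reachable a z} = {ω | RA ω ∅ a z} := by
    ext ω; exact RA.reachable_iff_RA
  rw [this]; exact measurable_RA ∅ a z

lemma measurable_finEvent (a y : Pt d) (hay : a ≠ y) :
    MeasurableSet {ω : EdgeCfg d | {z | RA ω {a} y z}.Finite} := by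
  classical
  have : {ω : EdgeCfg d | {z | RA ω {a} y z}.Finite} =
      ⋃ S : Finset (Pt d), ⋃ (_ : y ∈ S ∧ a ∉ S),
        ⋂ p : Pt d, ⋂ q : Pt d,
          {ω : EdgeCfg d | p ∈ S → q ∉ S → q ≠ a → ¬(cfgGraph d ω).Adj p q} := by
    ext ω
    simp only [Set.mem_setOf_eq, Set.mem_iUnion, Set.mem_iInter]
    rw [finite_RA_iff hay]
    constructor
    · rintro ⟨S, h1, h2, h3⟩
      exact ⟨S, ⟨h1, h2⟩, fun p q hp hq hqa => h3 p hp q hq hqa⟩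
    · rintro ⟨S, ⟨h1, h2⟩, h3⟩
      exact ⟨S, h1, h2, fun p hp q hq hqa => h3 p q hp hq hqa⟩
  rw [this]
  refine MeasurableSet.iUnion fun S => MeasurableSet.iUnion fun _ =>
    MeasurableSet.iInter fun p => MeasurableSet.iInter fun q => ?_
  by_cases h : p ∈ S ∧ q ∉ S ∧ q ≠ a
  · have : {ω : EdgeCfg d | p ∈ S → q ∉ S → q ≠ a → ¬(cfgGraph d ω).Adj p q} =
        {ω : EdgeCfg d | (cfgGraph d ω).Adj p q}ᶜ := by
      ext ω; simp [h.1, h.2.1, h.2.2]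
    rw [this]; exact (measurable_adjEvent p q).compl
  · have : {ω : EdgeCfg d | p ∈ S → q ∉ S → q ≠ a → ¬(cfgGraph d ω).Adj p q} = Set.univ := by
      ext ω
      simp only [Set.mem_setOf_eq, Set.mem_univ, iff_true]
      intro h1 h2 h3
      exact absurd ⟨h1, h2, h3⟩ h
    rw [this]; exact MeasurableSet.univ

/-- The Borel stand-in for `{ω | y ∈ pastOf d ω a}`. -/
def pastEvent (d : ℕ) (a y : Pt d) : Set (EdgeCfg d) :=
  {ω | (cfgGraph d ω).Reachable a y} ∩ {ω | {z | RA ω {a} y z}.Finite}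

lemma measurable_pastEvent (a y : Pt d) (hay : a ≠ y) :
    MeasurableSet (pastEvent d a y) :=
  (measurable_reach a y).inter (measurable_finEvent a y hay)

lemma pastEvent_iff {ω : EdgeCfg d} (hforest : IsOneEndedForest d ω) {a y : Pt d}
    (hay : a ≠ y) : ω ∈ pastEvent d a y ↔ y ∈ pastOf d ω a := by
  rw [past_iff hforest hay]; rfl

end Meas
section Shift
variable {d : ℕ} {ω : EdgeCfg d} {v : Pt d}

lemma measurable_shiftCfg (v : Pt d) : Measurable (shiftCfg d v) :=
  measurable_pi_lambda _ (fun e => measurable_pi_apply _)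

lemma shift_adj {a b : Pt d} :
    (cfgGraph d (shiftCfg d v ω)).Adj a b ↔ (cfgGraph d ω).Adj (a - v) (b - v) := by
  show (a ≠ b ∧ _) ↔ (a - v ≠ b - v ∧ _)
  rw [shiftCfg, Sym2.map_pair_eq]
  simp only [ne_eq, sub_left_inj]

lemma RA.shift_fwd {F : Set (Pt d)} {a z : Pt d} (h : RA (shiftCfg d v ω) F a z) :
    RA ω {p | p + v ∈ F} (a - v) (z - v) := by
  induction h with
  | refl ha => exact RA.refl _ (by simpa using ha)
  | tail h hbc hc ih => exact RA.tail ih (shift_adj.mp hbc) (by simpa using hc)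

lemma RA.shift_bwd {G : Set (Pt d)} {b w : Pt d} (h : RA ω G b w) :
    RA (shiftCfg d v ω) {q | q - v ∈ G} (b + v) (w + v) := by
  induction h with
  | refl hb => exact RA.refl _ (by simpa using hb)
  | tail h hbc hc ih =>
    refine RA.tail ih (shift_adj.mpr (by simpa using hbc)) (by simpa using hc)

lemma RA_shift_iff {F : Set (Pt d)} {a z : Pt d} :
    RA (shiftCfg d v ω) F a z ↔ RA ω {p | p + v ∈ F} (a - v) (z - v) := by
  constructor
  · exact RA.shift_fwd
  · intro h
    have := h.shift_bwd (v := v)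
    simpa using this

lemma reach_shift_iff {a z : Pt d} :
    (cfgGraph d (shiftCfg d v ω)).Reachable a z ↔ (cfgGraph d ω).Reachable (a - v) (z - v) := by
  rw [RA.reachable_iff_RA, RA.reachable_iff_RA, RA_shift_iff]
  have : {p : Pt d | p + v ∈ (∅ : Set (Pt d))} = ∅ := by ext p; simp
  rw [this]

lemma ray_shift_iff {y : Pt d} {γ : ℕ → Pt d} :
    IsRay d (shiftCfg d v ω) y γ ↔ IsRay d ω (y - v) (fun n => γ n - v) := by
  constructor
  · rintro ⟨h0, hinj, hadj⟩
    exact ⟨by show γ 0 - v = y - v; rw [h0], fun m n h => hinj (by simpa [sub_left_inj] using h),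
      fun n => shift_adj.mp (hadj n)⟩
  · rintro ⟨h0, hinj, hadj⟩
    refine ⟨?_, fun m n h => hinj (by simp [h]), fun n => shift_adj.mpr (hadj n)⟩
    have := h0
    simpa [sub_left_inj] using congrArg (fun p => p + v) this

lemma past_shift_iff {a y : Pt d} :
    y ∈ pastOf d (shiftCfg d v ω) a ↔ y - v ∈ pastOf d ω (a - v) := by
  constructor
  · rintro ⟨γ, hγ, k, hk⟩
    exact ⟨fun n => γ n - v, ray_shift_iff.mp hγ, k, by show γ k - v = a - v; rw [hk]⟩
  · rintro ⟨γ, hγ, k, hk⟩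
    refine ⟨fun n => γ n + v, ?_, k, by show γ k + v = a; rw [hk]; abel⟩
    rw [ray_shift_iff]
    simpa using hγ

lemma raSet_shift (x : Pt d) (ω : EdgeCfg d) :
    {z | RA (shiftCfg d x ω) {x} (0 : Pt d) z} =
      (fun q => q + x) '' {z | RA ω {(0 : Pt d)} (-x) z} := by
  ext z
  simp only [Set.mem_setOf_eq, Set.mem_image]
  rw [RA_shift_iff]
  have hF : {p : Pt d | p + x ∈ ({x} : Set (Pt d))} = {0} := by
    ext p; simp [add_eq_right]
  rw [hF]
  constructor
  · intro h
    exact ⟨z - x, by simpa using h, by abel⟩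
  · rintro ⟨w, hw, rfl⟩
    simpa using hw

lemma pastEvent_shift (x : Pt d) (ω : EdgeCfg d) :
    shiftCfg d x ω ∈ pastEvent d x 0 ↔ ω ∈ pastEvent d 0 (-x) := by
  unfold pastEvent
  simp only [Set.mem_inter_iff, Set.mem_setOf_eq]
  rw [reach_shift_iff]
  constructor
  · rintro ⟨h1, h2⟩
    refine ⟨by simpa using h1, ?_⟩
    rw [raSet_shift] at h2
    rwa [Set.finite_image_iff (Set.injOn_of_injective (add_left_injective x))] at h2
  · rintro ⟨h1, h2⟩
    refine ⟨by simpa using h1, ?_⟩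
    rw [raSet_shift]
    exact h2.image _

lemma comp_shift (x : Pt d) (ω : EdgeCfg d) :
    compOf d (shiftCfg d x ω) 0 = (fun q => q + x) '' compOf d ω (-x) := by
  ext z
  simp only [compOf, Set.mem_setOf_eq, Set.mem_image]
  rw [reach_shift_iff]
  constructor
  · intro h
    exact ⟨z - x, by simpa using h, by abel⟩
  · rintro ⟨w, hw, rfl⟩
    simpa using hw

lemma fcard_shift (x : Pt d) (ω : EdgeCfg d) (R : ℕ) :
    (compOf d (shiftCfg d x ω) 0 ∩ {p : Pt d | linf p ≤ R}).ncard =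
      (compOf d ω (-x) ∩ {p : Pt d | linf (p + x) ≤ R}).ncard := by
  rw [comp_shift]
  have : (fun q => q + x) '' compOf d ω (-x) ∩ {p : Pt d | linf p ≤ R} =
      (fun q => q + x) '' (compOf d ω (-x) ∩ {p : Pt d | linf (p + x) ≤ R}) := by
    ext z
    simp only [Set.mem_inter_iff, Set.mem_image, Set.mem_setOf_eq]
    constructor
    · rintro ⟨⟨w, hw, rfl⟩, hz⟩
      exact ⟨w, ⟨hw, hz⟩, rfl⟩
    · rintro ⟨w, ⟨hw, hz⟩, rfl⟩
      exact ⟨⟨w, hw, rfl⟩, hz⟩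
  rw [this, Set.ncard_image_of_injective _ (add_left_injective x)]

end Shift
section MeasCore

lemma measure_congr_of_null {α : Type*} [MeasurableSpace α] (μ : MeasureTheory.Measure α)
    {A B N : Set α}
    (hN : μ N = 0) (h : ∀ a, a ∉ N → (a ∈ A ↔ a ∈ B)) : μ A = μ B := by
  have hAB : A ⊆ B ∪ N := fun a ha => by
    by_cases haN : a ∈ N
    · exact Or.inr haN
    · exact Or.inl ((h a haN).mp ha)
  have hBA : B ⊆ A ∪ N := fun a ha => by
    by_cases haN : a ∈ N
    · exact Or.inr haN
    · exact Or.inl ((h a haN).mpr ha)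
  apply le_antisymm
  · calc μ A ≤ μ (B ∪ N) := measure_mono hAB
      _ ≤ μ B + μ N := measure_union_le _ _
      _ = μ B := by rw [hN, add_zero]
  · calc μ B ≤ μ (A ∪ N) := measure_mono hBA
      _ ≤ μ A + μ N := measure_union_le _ _
      _ = μ A := by rw [hN, add_zero]

lemma measurable_compcard {d : ℕ} (R : ℕ) :
    Measurable (fun ω : EdgeCfg d =>
      ((compOf d ω 0 ∩ {p : Pt d | linf p ≤ R}).ncard : ℝ≥0∞)) := by
  classical
  have hfin : {p : Pt d | linf p ≤ R}.Finite := ball_finite0 R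
  set B := hfin.toFinset with hB
  have key : ∀ ω : EdgeCfg d, ((compOf d ω 0 ∩ {p : Pt d | linf p ≤ R}).ncard : ℝ≥0∞) =
      ∑ p ∈ B, (if (cfgGraph d ω).Reachable 0 p then (1 : ℝ≥0∞) else 0) := by
    intro ω
    have hset : compOf d ω 0 ∩ {p : Pt d | linf p ≤ R} =
        ↑(B.filter (fun p => (cfgGraph d ω).Reachable 0 p)) := by
      ext p
      simp only [Set.mem_inter_iff, Finset.coe_filter, Set.mem_setOf_eq, compOf, hB,
        Set.Finite.mem_toFinset]
      tauto
    rw [hset, Set.ncard_coe_finset, Finset.card_filter]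
    rw [Nat.cast_sum]
    apply Finset.sum_congr rfl
    intro p _
    split_ifs <;> simp
  have heq : (fun ω : EdgeCfg d => ((compOf d ω 0 ∩ {p : Pt d | linf p ≤ R}).ncard : ℝ≥0∞)) =
      fun ω => ∑ p ∈ B, (if (cfgGraph d ω).Reachable 0 p then (1 : ℝ≥0∞) else 0) :=
    funext key
  rw [heq]
  apply Finset.measurable_sum
  intro p _
  exact Measurable.ite (measurable_reach 0 p) measurable_const measurable_const

open MeasureTheory in
/-- The Cauchy–Schwarz step: `μ(A)² / ∫ 1_A f ≤ ∫ 1_A f⁻¹` for a measurable `f` with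
`1 ≤ f ≤ N < ∞`. -/
lemma holder_step {α : Type*} [MeasurableSpace α] (μ : Measure α) [IsFiniteMeasure μ]
    {A : Set α} (hA : MeasurableSet A) {f : α → ℝ≥0∞} (hf : Measurable f)
    (h1 : ∀ a, 1 ≤ f a) {N : ℝ≥0∞} (hN : N ≠ ∞) (hfN : ∀ a, f a ≤ N) :
    μ A ^ 2 / (∫⁻ a, A.indicator f a ∂μ) ≤ ∫⁻ a, A.indicator (fun x => (f x)⁻¹) a ∂μ := by
  set I1 := ∫⁻ a, A.indicator f a ∂μ with hI1def
  set I2 := ∫⁻ a, A.indicator (fun x => (f x)⁻¹) a ∂μ with hI2def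
  have hsq : ∀ I : ℝ≥0∞, (I ^ (1/2 : ℝ)) ^ (2 : ℕ) = I := by
    intro I
    rw [← ENNReal.rpow_natCast (I ^ (1/2 : ℝ)) 2, ← ENNReal.rpow_mul]
    norm_num
  have hCS : μ A ≤ I1 ^ (1/2 : ℝ) * I2 ^ (1/2 : ℝ) := by
    set g1 : α → ℝ≥0∞ := fun a => (A.indicator f a) ^ (1/2 : ℝ) with hg1
    set g2 : α → ℝ≥0∞ := fun a => (A.indicator (fun x => (f x)⁻¹) a) ^ (1/2 : ℝ) with hg2
    have hmul : ∀ a, (g1 * g2) a = A.indicator (fun _ => (1 : ℝ≥0∞)) a := by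
      intro a
      by_cases ha : a ∈ A
      · simp only [Pi.mul_apply, hg1, hg2, Set.indicator_of_mem ha]
        rw [ENNReal.inv_rpow, ENNReal.mul_inv_cancel]
        · intro h
          have hge : (1:ℝ≥0∞) ≤ (f a) ^ (1/2:ℝ) := by
            calc (1:ℝ≥0∞) = (1:ℝ≥0∞) ^ (1/2:ℝ) := (ENNReal.one_rpow _).symm
              _ ≤ (f a) ^ (1/2:ℝ) := ENNReal.rpow_le_rpow (h1 a) (by norm_num)
          rw [h] at hge
          exact (not_le.mpr zero_lt_one) hge
        · intro h
          have hfa : f a = ⊤ := by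
            by_contra hne
            exact (ENNReal.rpow_ne_top_of_nonneg (by norm_num) hne) h
          exact (lt_irrefl (⊤ : ℝ≥0∞) (lt_of_le_of_lt (hfa ▸ hfN a)
            (lt_top_iff_ne_top.mpr hN))).elim
      · simp only [Pi.mul_apply, hg1, hg2, Set.indicator_of_notMem ha]
        rw [ENNReal.zero_rpow_of_pos (by norm_num)]
        simp
    have hg1m : AEMeasurable g1 μ := ((hf.indicator hA).pow_const _).aemeasurable
    have hg2m : AEMeasurable g2 μ := ((hf.inv.indicator hA).pow_const _).aemeasurable
    have hhold := ENNReal.lintegral_mul_le_Lp_mul_Lq μ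
      (Real.HolderConjugate.two_two : Real.HolderConjugate 2 2) hg1m hg2m
    have hμA : μ A = ∫⁻ a, (g1 * g2) a ∂μ := by
      rw [lintegral_congr hmul]
      exact (lintegral_indicator_one hA).symm
    have hg1sq : (∫⁻ a, g1 a ^ (2:ℝ) ∂μ) = I1 := by
      apply lintegral_congr
      intro a
      rw [hg1, ← ENNReal.rpow_mul]
      norm_num
    have hg2sq : (∫⁻ a, g2 a ^ (2:ℝ) ∂μ) = I2 := by
      apply lintegral_congr
      intro a
      rw [hg2, ← ENNReal.rpow_mul]
      norm_num
    calc μ A = ∫⁻ a, (g1 * g2) a ∂μ := hμA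
      _ ≤ (∫⁻ a, g1 a ^ (2:ℝ) ∂μ) ^ (1/2 : ℝ) * (∫⁻ a, g2 a ^ (2:ℝ) ∂μ) ^ (1/2 : ℝ) := hhold
      _ = I1 ^ (1/2 : ℝ) * I2 ^ (1/2 : ℝ) := by rw [hg1sq, hg2sq]
  have hI1_le : I1 ≤ N * μ Set.univ := by
    have : ∀ a, A.indicator f a ≤ N := by
      intro a
      by_cases ha : a ∈ A
      · simpa [Set.indicator_of_mem ha] using hfN a
      · simp [Set.indicator_of_notMem ha]
    calc I1 ≤ ∫⁻ _, N ∂μ := lintegral_mono this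
      _ = N * μ Set.univ := lintegral_const N
  have hI1top : I1 ≠ ∞ :=
    ne_top_of_le_ne_top (ENNReal.mul_ne_top hN (measure_ne_top μ _)) hI1_le
  by_cases hI2top : I2 = ∞
  · rw [hI2top]; exact le_top
  by_cases hI10 : I1 = 0
  · have hA0 : μ A = 0 := by
      have hle : μ A ≤ I1 := by
        rw [hI1def, ← lintegral_indicator_one hA]
        exact lintegral_mono (fun a => Set.indicator_le_indicator (h1 a))
      exact le_antisymm (hle.trans (le_of_eq hI10)) zero_le
    rw [hA0]
    simp
  rw [ENNReal.div_le_iff hI10 hI1top]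
  calc μ A ^ 2 ≤ (I1 ^ (1/2 : ℝ) * I2 ^ (1/2 : ℝ)) ^ (2 : ℕ) := pow_le_pow_left' hCS 2
    _ = I1 * I2 := by rw [mul_pow, hsq, hsq]
    _ = I2 * I1 := mul_comm _ _

end MeasCore
section Pointwise
variable {d : ℕ}

lemma linf_zero : linf (0 : Pt d) = 0 := by
  simp [linf]

lemma past_mem_comp {ω : EdgeCfg d} {y : Pt d} (h : y ∈ pastOf d ω 0) :
    (cfgGraph d ω).Reachable 0 y := by
  obtain ⟨γ, hγ, k, hk⟩ := h
  have := ray_reachable hγ k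
  rw [hk] at this
  exact this.symm

open Classical in
lemma pointwise_bound {ω : EdgeCfg d} (hfor : IsOneEndedForest d ω) (r : ℕ) (hr : 1 ≤ r)
    (annF : Finset (Pt d)) (hmem : ∀ x ∈ annF, r < linf x ∧ linf x ≤ 2 * r) :
    (∑ x ∈ annF, (pastEvent d x 0).indicator
        (fun ω' => (((compOf d ω' 0 ∩ {p : Pt d | linf p ≤ 4 * r}).ncard : ℝ≥0∞))⁻¹)
        (shiftCfg d x ω))
      ≤ (⋃ x ∈ annF, (shiftCfg d x) ⁻¹' (pastEvent d x 0)).indicator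
          (fun _ => (1 : ℝ≥0∞)) ω := by
  have hx0 : ∀ x ∈ annF, (0 : Pt d) ≠ -x := by
    intro x hx h
    have hx0' : x = 0 := by
      have := congrArg Neg.neg h
      simpa using this.symm
    have hlt := (hmem x hx).1
    rw [hx0', linf_zero] at hlt
    omega
  have hterm : ∀ x ∈ annF, (pastEvent d x 0).indicator
      (fun ω' => (((compOf d ω' 0 ∩ {p : Pt d | linf p ≤ 4 * r}).ncard : ℝ≥0∞))⁻¹)
      (shiftCfg d x ω) =
      if -x ∈ pastOf d ω 0 then
        ((compOf d ω (-x) ∩ {p : Pt d | linf (p + x) ≤ 4 * r}).ncard : ℝ≥0∞)⁻¹ else 0 := by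
    intro x hx
    by_cases h : -x ∈ pastOf d ω 0
    · rw [if_pos h, Set.indicator_of_mem
        ((pastEvent_shift x ω).mpr ((pastEvent_iff hfor (hx0 x hx)).mpr h)), fcard_shift]
    · rw [if_neg h, Set.indicator_of_notMem
        (fun hc => h ((pastEvent_iff hfor (hx0 x hx)).mp ((pastEvent_shift x ω).mp hc)))]
  by_cases hE : ∃ x ∈ annF, -x ∈ pastOf d ω 0
  · obtain ⟨x₀, hx₀, hpast₀⟩ := hE
    have hmemE : ω ∈ ⋃ x ∈ annF, (shiftCfg d x) ⁻¹' (pastEvent d x 0) := by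
      refine Set.mem_biUnion hx₀ ?_
      exact (pastEvent_shift x₀ ω).mpr ((pastEvent_iff hfor (hx0 x₀ hx₀)).mpr hpast₀)
    rw [Set.indicator_of_mem hmemE]
    -- the count
    set C := compOf d ω 0 ∩ {p : Pt d | linf p ≤ 2 * r} with hC
    have hCfin : C.Finite := (ball_finite0 (2 * r)).subset Set.inter_subset_right
    have hC0 : (0 : Pt d) ∈ C := ⟨SimpleGraph.Reachable.refl _, by simp [linf_zero]⟩
    have hCpos : 0 < C.ncard := (Set.ncard_pos hCfin).mpr ⟨0, hC0⟩
    have hbound : ∀ x ∈ annF, (if -x ∈ pastOf d ω 0 then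
        ((compOf d ω (-x) ∩ {p : Pt d | linf (p + x) ≤ 4 * r}).ncard : ℝ≥0∞)⁻¹ else 0)
        ≤ if -x ∈ pastOf d ω 0 then ((C.ncard : ℝ≥0∞))⁻¹ else 0 := by
      intro x hx
      by_cases h : -x ∈ pastOf d ω 0
      · rw [if_pos h, if_pos h]
        have hreach : (cfgGraph d ω).Reachable 0 (-x) := past_mem_comp h
        have hcompeq : compOf d ω (-x) = compOf d ω 0 := by
          ext z
          exact ⟨fun hz => hreach.trans hz, fun hz => hreach.symm.trans hz⟩
        have hsub : C ⊆ compOf d ω (-x) ∩ {p : Pt d | linf (p + x) ≤ 4 * r} := by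
          rw [hcompeq]
          rintro p ⟨hp1, hp2⟩
          refine ⟨hp1, ?_⟩
          have := linf_add_le p x
          have hx2 : linf x ≤ 2 * r := (hmem x hx).2
          have hp2' : linf p ≤ 2 * r := hp2
          simp only [Set.mem_setOf_eq]
          omega
        have hfin4 : (compOf d ω (-x) ∩ {p : Pt d | linf (p + x) ≤ 4 * r}).Finite := by
          apply (ball_finite (-x) (4 * r)).subset
          rintro p ⟨-, hp⟩
          simpa [sub_neg_eq_add] using hp
        have hcard : C.ncard ≤ (compOf d ω (-x) ∩ {p : Pt d | linf (p + x) ≤ 4 * r}).ncard :=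
          Set.ncard_le_ncard hsub hfin4
        exact ENNReal.inv_le_inv.mpr (by exact_mod_cast hcard)
      · rw [if_neg h, if_neg h]
    calc (∑ x ∈ annF, (pastEvent d x 0).indicator
        (fun ω' => (((compOf d ω' 0 ∩ {p : Pt d | linf p ≤ 4 * r}).ncard : ℝ≥0∞))⁻¹)
        (shiftCfg d x ω))
        = ∑ x ∈ annF, (if -x ∈ pastOf d ω 0 then
            ((compOf d ω (-x) ∩ {p : Pt d | linf (p + x) ≤ 4 * r}).ncard : ℝ≥0∞)⁻¹ else 0) :=
          Finset.sum_congr rfl hterm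
      _ ≤ ∑ x ∈ annF, (if -x ∈ pastOf d ω 0 then ((C.ncard : ℝ≥0∞))⁻¹ else 0) :=
          Finset.sum_le_sum hbound
      _ = ∑ x ∈ annF.filter (fun x => -x ∈ pastOf d ω 0), ((C.ncard : ℝ≥0∞))⁻¹ :=
          (Finset.sum_filter _ _).symm
      _ = ((annF.filter (fun x => -x ∈ pastOf d ω 0)).card : ℝ≥0∞) * ((C.ncard : ℝ≥0∞))⁻¹ := by
          rw [Finset.sum_const, nsmul_eq_mul]
      _ ≤ ((C.ncard : ℝ≥0∞)) * ((C.ncard : ℝ≥0∞))⁻¹ := by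
          apply mul_le_mul_left
          have hcard : (annF.filter (fun x => -x ∈ pastOf d ω 0)).card ≤ C.ncard := by
            have h1 : (annF.filter (fun x => -x ∈ pastOf d ω 0)).card ≤ hCfin.toFinset.card := by
              apply Finset.card_le_card_of_injOn (fun x => -x)
              · intro x hxf
                rw [Finset.mem_coe, Finset.mem_filter] at hxf
                rw [Finset.mem_coe, Set.Finite.mem_toFinset, hC]
                refine ⟨past_mem_comp hxf.2, ?_⟩
                have h2r := (hmem x hxf.1).2
                simpa [linf_neg] using h2r
              · exact fun a _ b _ hab => neg_injective hab
            rwa [← Set.ncard_eq_toFinset_card _ hCfin] at h1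
          exact_mod_cast hcard
      _ = 1 := ENNReal.mul_inv_cancel (by exact_mod_cast hCpos.ne') (ENNReal.natCast_ne_top _)
  · push_neg at hE
    have : (∑ x ∈ annF, (pastEvent d x 0).indicator
        (fun ω' => (((compOf d ω' 0 ∩ {p : Pt d | linf p ≤ 4 * r}).ncard : ℝ≥0∞))⁻¹)
        (shiftCfg d x ω)) = 0 := by
      apply Finset.sum_eq_zero
      intro x hx
      rw [hterm x hx, if_neg (hE x hx)]
    rw [this]
    exact zero_le

end Pointwise

/-- **Mass-transport diameter bound** (Theorem on the past of the origin).  If `μ` is a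
translation-invariant probability measure on edge configurations that is a.s. a spanning
forest with infinite one-ended components, then for every `r ≥ 1`:
`μ(diam(past_o) > r) ≥ Σ_{x : r < ‖x‖∞ ≤ 2r} μ(o ∈ past_x)² / E_μ[|T_o ∩ D_o(4r)|·1_{o ∈ past_x}]`. -/
theorem mass_transport_diam_past (d : ℕ) (hd : 1 ≤ d)
    (μ : Measure (EdgeCfg d)) [IsProbabilityMeasure μ]
    (hinv : ∀ v : Pt d, μ.map (shiftCfg d v) = μ)
    (hforest : ∀ᵐ ω ∂μ, IsOneEndedForest d ω)
    (r : ℕ) (hr : 1 ≤ r) :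
    μ {ω | ∃ v ∈ pastOf d ω 0, r < linf v} ≥
      ∑' x : Pt d,
        if r < linf x ∧ linf x ≤ 2 * r then
          (μ {ω | (0 : Pt d) ∈ pastOf d ω x}) ^ 2 /
            ∫⁻ ω, Set.indicator {ω' : EdgeCfg d | (0 : Pt d) ∈ pastOf d ω' x}
              (fun ω' => ((compOf d ω' 0 ∩ {p : Pt d | linf p ≤ 4 * r}).ncard : ℝ≥0∞)) ω ∂μ
        else 0 := by
    classical
  have hnull : μ {ω : EdgeCfg d | ¬IsOneEndedForest d ω} = 0 := ae_iff.mp hforest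
  set f : EdgeCfg d → ℝ≥0∞ :=
    fun ω' => ((compOf d ω' 0 ∩ {p : Pt d | linf p ≤ 4 * r}).ncard : ℝ≥0∞) with hfdef
  have hfmeas : Measurable f := measurable_compcard (4 * r)
  have hbox4fin : {p : Pt d | linf p ≤ 4 * r}.Finite := ball_finite0 _
  have hNtop : (({p : Pt d | linf p ≤ 4 * r}.ncard : ℝ≥0∞)) ≠ ∞ := ENNReal.natCast_ne_top _
  have hf1 : ∀ ω', 1 ≤ f ω' := by
    intro ω'
    have h0 : (0 : Pt d) ∈ compOf d ω' 0 ∩ {p : Pt d | linf p ≤ 4 * r} :=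
      ⟨SimpleGraph.Reachable.refl _, by simp [linf_zero]⟩
    have hpos : 0 < (compOf d ω' 0 ∩ {p : Pt d | linf p ≤ 4 * r}).ncard :=
      (Set.ncard_pos (hbox4fin.subset Set.inter_subset_right)).mpr ⟨0, h0⟩
    show (1 : ℝ≥0∞) ≤ ((compOf d ω' 0 ∩ {p : Pt d | linf p ≤ 4 * r}).ncard : ℝ≥0∞)
    exact_mod_cast hpos
  have hfN : ∀ ω', f ω' ≤ (({p : Pt d | linf p ≤ 4 * r}.ncard : ℝ≥0∞)) := fun ω' => by
    show ((compOf d ω' 0 ∩ {p : Pt d | linf p ≤ 4 * r}).ncard : ℝ≥0∞) ≤ _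
    exact_mod_cast Set.ncard_le_ncard Set.inter_subset_right hbox4fin
  set annF : Finset (Pt d) :=
    ((ball_finite0 (d := d) (2 * r)).toFinset).filter (fun x => r < linf x) with hannF
  have hannmem : ∀ x : Pt d, x ∈ annF ↔ (r < linf x ∧ linf x ≤ 2 * r) := by
    intro x
    rw [hannF, Finset.mem_filter, Set.Finite.mem_toFinset]
    exact ⟨fun h => ⟨h.2, h.1⟩, fun h => ⟨h.2, h.1⟩⟩
  have hx0 : ∀ x ∈ annF, x ≠ (0 : Pt d) := by
    intro x hx h
    have := ((hannmem x).mp hx).1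
    rw [h, linf_zero] at this
    omega
  rw [ge_iff_le, tsum_eq_sum (s := annF) (f := fun x =>
      if r < linf x ∧ linf x ≤ 2 * r then
        (μ {ω | (0 : Pt d) ∈ pastOf d ω x}) ^ 2 /
          ∫⁻ ω, Set.indicator {ω' : EdgeCfg d | (0 : Pt d) ∈ pastOf d ω' x} f ω ∂μ
      else 0)
    (by
      intro x hx
      exact if_neg (fun hcond => hx ((hannmem x).mpr hcond)))]
  have hxstep : ∀ x ∈ annF,
      (if r < linf x ∧ linf x ≤ 2 * r then
        (μ {ω | (0 : Pt d) ∈ pastOf d ω x}) ^ 2 /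
          ∫⁻ ω, Set.indicator {ω' : EdgeCfg d | (0 : Pt d) ∈ pastOf d ω' x} f ω ∂μ
      else 0)
      ≤ ∫⁻ ω, (pastEvent d x 0).indicator (fun ω' => (f ω')⁻¹) (shiftCfg d x ω) ∂μ := by
    intro x hx
    rw [if_pos ((hannmem x).mp hx)]
    have hx0' : x ≠ (0 : Pt d) := hx0 x hx
    have hmeasE : MeasurableSet (pastEvent d x 0) := measurable_pastEvent x 0 hx0'
    have hAeq : μ {ω | (0 : Pt d) ∈ pastOf d ω x} = μ (pastEvent d x 0) := by
      apply measure_congr_of_null μ hnull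
      intro ω hω
      have hfor : IsOneEndedForest d ω := not_not.mp hω
      exact ⟨fun h => (pastEvent_iff hfor hx0').mpr h, fun h => (pastEvent_iff hfor hx0').mp h⟩
    have hDeq : (∫⁻ ω, Set.indicator {ω' : EdgeCfg d | (0 : Pt d) ∈ pastOf d ω' x} f ω ∂μ)
        = ∫⁻ ω, (pastEvent d x 0).indicator f ω ∂μ := by
      apply lintegral_congr_ae
      filter_upwards [hforest] with ω hω
      have hiff : ω ∈ {ω' : EdgeCfg d | (0 : Pt d) ∈ pastOf d ω' x} ↔ ω ∈ pastEvent d x 0 :=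
        ⟨fun h => (pastEvent_iff hω hx0').mpr h, fun h => (pastEvent_iff hω hx0').mp h⟩
      by_cases hm : ω ∈ pastEvent d x 0
      · rw [Set.indicator_of_mem hm, Set.indicator_of_mem (hiff.mpr hm)]
      · rw [Set.indicator_of_notMem hm, Set.indicator_of_notMem (fun hc => hm (hiff.mp hc))]
    rw [hAeq, hDeq]
    have htrans : (∫⁻ ω, (pastEvent d x 0).indicator (fun ω' => (f ω')⁻¹) ω ∂μ)
        = ∫⁻ ω, (pastEvent d x 0).indicator (fun ω' => (f ω')⁻¹) (shiftCfg d x ω) ∂μ := by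
      conv_lhs => rw [← hinv x]
      exact lintegral_map (hfmeas.inv.indicator hmeasE) (measurable_shiftCfg x)
    rw [← htrans]
    exact holder_step μ hmeasE hfmeas hf1 hNtop hfN
  calc (∑ x ∈ annF,
      if r < linf x ∧ linf x ≤ 2 * r then
        (μ {ω | (0 : Pt d) ∈ pastOf d ω x}) ^ 2 /
          ∫⁻ ω, Set.indicator {ω' : EdgeCfg d | (0 : Pt d) ∈ pastOf d ω' x} f ω ∂μ
      else 0)
      ≤ ∑ x ∈ annF, ∫⁻ ω, (pastEvent d x 0).indicator (fun ω' => (f ω')⁻¹)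
          (shiftCfg d x ω) ∂μ := Finset.sum_le_sum hxstep
    _ = ∫⁻ ω, ∑ x ∈ annF, (pastEvent d x 0).indicator (fun ω' => (f ω')⁻¹)
          (shiftCfg d x ω) ∂μ := by
        rw [lintegral_finset_sum]
        intro x hx
        exact (hfmeas.inv.indicator (measurable_pastEvent x 0 (hx0 x hx))).comp
          (measurable_shiftCfg x)
    _ ≤ ∫⁻ ω, (⋃ x ∈ annF, (shiftCfg d x) ⁻¹' (pastEvent d x 0)).indicator
          (fun _ => (1 : ℝ≥0∞)) ω ∂μ := by
        apply lintegral_mono_ae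
        filter_upwards [hforest] with ω hω
        exact pointwise_bound hω r hr annF (fun x hx => (hannmem x).mp hx)
    _ = μ (⋃ x ∈ annF, (shiftCfg d x) ⁻¹' (pastEvent d x 0)) := by
        exact lintegral_indicator_one (Finset.measurableSet_biUnion annF
          (fun x hx => (measurable_shiftCfg x) (measurable_pastEvent x 0 (hx0 x hx))))
    _ ≤ μ {ω | ∃ v ∈ pastOf d ω 0, r < linf v} := by
        have hsub : (⋃ x ∈ annF, (shiftCfg d x) ⁻¹' (pastEvent d x 0)) ⊆
            {ω | ∃ v ∈ pastOf d ω 0, r < linf v} ∪ {ω : EdgeCfg d | ¬IsOneEndedForest d ω} := by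
          intro ω hω
          by_cases hfor : IsOneEndedForest d ω
          · left
            obtain ⟨x, hx, hmem'⟩ := Set.mem_iUnion₂.mp hω
            have h0x : (0 : Pt d) ≠ -x := by
              intro h
              apply hx0 x hx
              have := congrArg Neg.neg h
              simpa using this.symm
            refine ⟨-x, ?_, ?_⟩
            · exact (pastEvent_iff hfor h0x).mp ((pastEvent_shift x ω).mp hmem')
            · rw [linf_neg]
              exact ((hannmem x).mp hx).1
          · right
            exact hfor
        calc μ (⋃ x ∈ annF, (shiftCfg d x) ⁻¹' (pastEvent d x 0))
            ≤ μ ({ω | ∃ v ∈ pastOf d ω 0, r < linf v} ∪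
                {ω : EdgeCfg d | ¬IsOneEndedForest d ω}) := measure_mono hsub
          _ ≤ μ {ω | ∃ v ∈ pastOf d ω 0, r < linf v} +
                μ {ω : EdgeCfg d | ¬IsOneEndedForest d ω} := measure_union_le _ _
          _ = μ {ω | ∃ v ∈ pastOf d ω 0, r < linf v} := by rw [hnull, add_zero]
end Rays
end Koenig
end
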